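/- Let H ∈ (0,1/2). Then lim_{T→∞} (1/(e^{-T} T^{3H-1})) ∫₀ᵀ e^{-u} u^{H-1} (∫_{T-u}^{T} e^{-a} a^{2H-1} da) du = B(2H,H). -/

import Mathlib

open MeasureTheory Real Set Filter Topology

lemma beta_integrable {p q : ℝ} (hp : -1 < p) (hq : -1 < q) :
    IntegrableOn (fun s : ℝ => s ^ p * (1 - s) ^ q) (Ioo (0:ℝ) 1) := by
  have hmeas : Measurable fun s : ℝ => s ^ p * (1 - s) ^ q :=
    (measurable_id.pow measurable_const).mul
      ((measurable_const.sub measurable_id).pow measurable_const)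
  have h1 : IntegrableOn (fun s : ℝ => s ^ p * (1 - s) ^ q) (Ioc (0:ℝ) (1/2)) := by
    have base : IntegrableOn (fun s : ℝ => s ^ p) (Ioc (0:ℝ) (1/2)) := by
      have := intervalIntegral.intervalIntegrable_rpow' (a := 0) (b := 1/2) hp
      rwa [intervalIntegrable_iff_integrableOn_Ioc_of_le (by norm_num)] at this
    refine Integrable.mono' (base.const_mul (max ((2:ℝ)⁻¹ ^ q) 1)) hmeas.aestronglyMeasurable ?_
    filter_upwards [ae_restrict_mem measurableSet_Ioc] with s hs
    have h0s : (0:ℝ) < s := hs.1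
    have h1s : (0:ℝ) < 1 - s := by
      have := hs.2; norm_num at this ⊢; linarith
    rw [Real.norm_eq_abs, abs_of_nonneg (mul_nonneg (rpow_nonneg h0s.le _) (rpow_nonneg h1s.le _))]
    rw [mul_comm (max ((2:ℝ)⁻¹ ^ q) 1) (s ^ p)]
    apply mul_le_mul_of_nonneg_left _ (rpow_nonneg h0s.le _)
    rcases le_or_gt q 0 with hq0 | hq0
    · refine le_trans (Real.rpow_le_rpow_of_nonpos (by norm_num) ?_ hq0) (le_max_left _ _)
      have := hs.2; norm_num at this ⊢; linarith
    · refine le_trans (Real.rpow_le_one h1s.le (by linarith) hq0.le) (le_max_right _ _)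
  have h2 : IntegrableOn (fun s : ℝ => s ^ p * (1 - s) ^ q) (Ico (1/2:ℝ) 1) := by
    have base : IntegrableOn (fun s : ℝ => (1 - s) ^ q) (Ico (1/2:ℝ) 1) := by
      have i1 : IntervalIntegrable (fun x : ℝ => x ^ q) volume 0 (1/2) :=
        intervalIntegral.intervalIntegrable_rpow' hq
      have i2 := (i1.comp_sub_left 1).symm
      norm_num at i2
      rw [intervalIntegrable_iff_integrableOn_Ioc_of_le (by norm_num)] at i2
      have := (integrableOn_Icc_iff_integrableOn_Ioc (f := fun s : ℝ => (1 - s) ^ q) (a := 1/2) (b := 1)).mpr i2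
      exact this.mono_set Ico_subset_Icc_self
    refine Integrable.mono' (base.const_mul (max ((2:ℝ)⁻¹ ^ p) 1)) hmeas.aestronglyMeasurable ?_
    filter_upwards [ae_restrict_mem measurableSet_Ico] with s hs
    have h0s : (0:ℝ) < s := by have := hs.1; norm_num at this ⊢; linarith
    have h1s : (0:ℝ) ≤ 1 - s := by have := hs.2; linarith
    rw [Real.norm_eq_abs, abs_of_nonneg (mul_nonneg (rpow_nonneg h0s.le _) (rpow_nonneg h1s _))]
    rw [mul_comm (max ((2:ℝ)⁻¹ ^ p) 1) ((1-s) ^ q), mul_comm (s ^ p) ((1-s) ^ q)]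
    apply mul_le_mul_of_nonneg_left _ (rpow_nonneg h1s _)
    rcases le_or_gt p 0 with hp0 | hp0
    · refine le_trans (Real.rpow_le_rpow_of_nonpos (by norm_num) ?_ hp0) (le_max_left _ _)
      have := hs.1; norm_num at this ⊢; linarith
    · refine le_trans (Real.rpow_le_one h0s.le (by have := hs.2; linarith) hp0.le) (le_max_right _ _)
  refine (h1.union h2).mono_set ?_
  intro x hx
  rcases le_or_gt x (1/2) with h | h
  · exact Or.inl ⟨hx.1, h⟩
  · exact Or.inr ⟨h.le, hx.2⟩

lemma reflect_eq (H : ℝ) :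
    (∫ x in Ioc (0:ℝ) 1, x ^ (2*H - 1) * (1 - x) ^ (H - 1))
      = ∫ s in Ioo (0:ℝ) 1, s ^ (H - 1) * (1 - s) ^ (2*H - 1) := by
  rw [← integral_Ioc_eq_integral_Ioo,
    ← intervalIntegral.integral_of_le (by norm_num : (0:ℝ) ≤ 1),
    ← intervalIntegral.integral_of_le (by norm_num : (0:ℝ) ≤ 1)]
  have h := intervalIntegral.integral_comp_sub_left
    (a := 0) (b := 1) (fun y : ℝ => y ^ (H - 1) * (1 - y) ^ (2*H - 1)) 1
  norm_num at h
  rw [← h]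
  apply intervalIntegral.integral_congr
  intro x _
  simp only [sub_sub_cancel]
  ring

noncomputable def stmt10Phi (H T : ℝ) : ℝ × ℝ → ℝ := fun z =>
  z.1 ^ (H-1) *
    ((Ioc (0:ℝ) (T*z.1)).indicator (fun r => Real.exp (-r) * (1 - z.1 + r/T) ^ (2*H-1)) z.2)
noncomputable def stmt10G (H : ℝ) : ℝ × ℝ → ℝ := fun z =>
  (z.1 ^ (H-1) * (1 - z.1) ^ (2*H-1)) * Real.exp (-z.2)
noncomputable def stmt10rho : Measure (ℝ × ℝ) :=
  ((volume : Measure ℝ).restrict (Ioo 0 1)).prod ((volume : Measure ℝ).restrict (Ioi 0))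
lemma stmt10Phi_meas (H T : ℝ) : Measurable (stmt10Phi H T) := by
  have heq : stmt10Phi H T = fun z : ℝ × ℝ =>
      z.1 ^ (H-1) *
        ({w : ℝ × ℝ | w.2 ∈ Ioc (0:ℝ) (T*w.1)}.indicator
          (fun w => Real.exp (-w.2) * (1 - w.1 + w.2/T) ^ (2*H-1)) z) := by
    funext z
    by_cases h : z.2 ∈ Ioc (0:ℝ) (T*z.1)
    · rw [stmt10Phi, Set.indicator_of_mem h, Set.indicator_of_mem (by exact h)]
    · rw [stmt10Phi, Set.indicator_of_notMem h, Set.indicator_of_notMem (by exact h)]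
  rw [heq]
  have hset : MeasurableSet {w : ℝ × ℝ | w.2 ∈ Ioc (0:ℝ) (T*w.1)} := by
    have : {w : ℝ × ℝ | w.2 ∈ Ioc (0:ℝ) (T*w.1)}
        = {w : ℝ × ℝ | (0:ℝ) < w.2} ∩ {w : ℝ × ℝ | w.2 ≤ T * w.1} := by
      ext w; simp [Set.mem_Ioc, and_comm]
    rw [this]
    exact (measurableSet_lt measurable_const measurable_snd).inter
      (measurableSet_le measurable_snd (measurable_fst.const_mul T))
  refine (measurable_fst.pow measurable_const).mul (Measurable.indicator ?_ hset)
  exact (measurable_snd.neg.exp).mul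
    (((measurable_const.sub measurable_fst).add (measurable_snd.div_const T)).pow
      measurable_const)
lemma stmt10_bound {H : ℝ} (hH : H ∈ Set.Ioo (0:ℝ) (1/2)) {T : ℝ} (hT : 0 < T) :
    ∀ᵐ z ∂stmt10rho, ‖stmt10Phi H T z‖ ≤ stmt10G H z := by
  rw [stmt10rho, Measure.prod_restrict]
  filter_upwards [ae_restrict_mem (measurableSet_Ioo.prod measurableSet_Ioi)] with z hz
  obtain ⟨hz1, hz2⟩ := hz
  have h0s : (0:ℝ) < z.1 := hz1.1
  have h1s : (0:ℝ) < 1 - z.1 := by linarith [hz1.2]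
  have hr : (0:ℝ) < z.2 := hz2
  have hGnn : 0 ≤ stmt10G H z := by
    rw [stmt10G]
    positivity
  by_cases hmem : z.2 ∈ Ioc (0:ℝ) (T*z.1)
  · rw [stmt10Phi, Set.indicator_of_mem hmem, Real.norm_eq_abs, abs_of_nonneg (by positivity)]
    have key : (1 - z.1 + z.2/T) ^ (2*H-1) ≤ (1 - z.1) ^ (2*H-1) :=
      Real.rpow_le_rpow_of_nonpos h1s
        (by have : 0 ≤ z.2 / T := div_nonneg hr.le hT.le; linarith)
        (by linarith [hH.2])
    calc z.1 ^ (H-1) * (Real.exp (-z.2) * (1 - z.1 + z.2/T) ^ (2*H-1))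
        ≤ z.1 ^ (H-1) * (Real.exp (-z.2) * (1 - z.1) ^ (2*H-1)) := by
          gcongr
      _ = stmt10G H z := by rw [stmt10G]; ring
  · rw [stmt10Phi, Set.indicator_of_notMem hmem, mul_zero, norm_zero]
    exact hGnn

lemma stmt10_lim {H : ℝ} (hH : H ∈ Set.Ioo (0:ℝ) (1/2)) :
    ∀ᵐ z ∂stmt10rho, Tendsto (fun T => stmt10Phi H T z) atTop (𝓝 (stmt10G H z)) := by
  rw [stmt10rho, Measure.prod_restrict]
  filter_upwards [ae_restrict_mem (measurableSet_Ioo.prod measurableSet_Ioi)] with z hz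
  obtain ⟨hz1, hz2⟩ := hz
  have h0s : (0:ℝ) < z.1 := hz1.1
  have h1s : (0:ℝ) < 1 - z.1 := by linarith [hz1.2]
  have hr : (0:ℝ) < z.2 := hz2
  have hdiv : Tendsto (fun T : ℝ => z.2 / T) atTop (𝓝 0) :=
    Tendsto.div_atTop tendsto_const_nhds tendsto_id
  have hbase : Tendsto (fun T : ℝ => 1 - z.1 + z.2 / T) atTop (𝓝 (1 - z.1)) := by
    have := tendsto_const_nhds (α := ℝ) (x := 1 - z.1) (f := atTop)
    simpa using this.add hdiv
  have hrpow : Tendsto (fun T : ℝ => (1 - z.1 + z.2 / T) ^ (2*H-1)) atTop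
      (𝓝 ((1 - z.1) ^ (2*H-1))) := hbase.rpow_const (Or.inl h1s.ne')
  have hfin : Tendsto (fun T : ℝ =>
      z.1 ^ (H-1) * (Real.exp (-z.2) * (1 - z.1 + z.2 / T) ^ (2*H-1))) atTop
      (𝓝 (stmt10G H z)) := by
    have := (hrpow.const_mul (Real.exp (-z.2))).const_mul (z.1 ^ (H-1))
    convert this using 2
    rw [stmt10G]; ring
  refine hfin.congr' ?_
  filter_upwards [eventually_ge_atTop (z.2 / z.1), eventually_gt_atTop (0:ℝ)] with T hT hT0
  have hmem : z.2 ∈ Ioc (0:ℝ) (T * z.1) := by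
    refine ⟨hr, ?_⟩
    rw [div_le_iff₀ h0s] at hT
    linarith [hT]
  rw [stmt10Phi, Set.indicator_of_mem hmem]

lemma exp_neg_int : IntegrableOn (fun r : ℝ => Real.exp (-r)) (Ioi (0:ℝ)) := by
  have := exp_neg_integrableOn_Ioi 0 (b := 1) one_pos
  simpa using this

lemma stmt10G_int {H : ℝ} (hH : H ∈ Set.Ioo (0:ℝ) (1/2)) :
    Integrable (stmt10G H) stmt10rho := by
  rw [stmt10rho]
  exact (beta_integrable (by linarith [hH.1]) (by linarith [hH.1])).mul_prod exp_neg_int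

lemma stmt10G_integral {H : ℝ} (hH : H ∈ Set.Ioo (0:ℝ) (1/2)) :
    ∫ z, stmt10G H z ∂stmt10rho = ∫ s in Ioo (0:ℝ) 1, s ^ (H-1) * (1 - s) ^ (2*H-1) := by
  rw [stmt10rho]
  unfold stmt10G
  rw [MeasureTheory.integral_prod_mul (μ := (volume : Measure ℝ).restrict (Ioo 0 1))
    (ν := (volume : Measure ℝ).restrict (Ioi 0))
    (fun s : ℝ => s ^ (H-1) * (1 - s) ^ (2*H-1)) (fun r : ℝ => Real.exp (-r))]
  rw [integral_exp_neg_Ioi_zero, mul_one]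

lemma stmt10_cov {H : ℝ} (hH : H ∈ Set.Ioo (0:ℝ) (1/2)) {T : ℝ} (hT : 0 < T)
    (hInt : Integrable (stmt10Phi H T) stmt10rho) :
    (∫ u in Ioc (0:ℝ) T,
        Real.exp (-u) * u ^ (H - 1) *
          ∫ a in Ioc (T - u) T, Real.exp (-a) * a ^ (2*H - 1))
      / (Real.exp (-T) * T ^ (3*H - 1))
    = ∫ z, stmt10Phi H T z ∂stmt10rho := by
  set g₀ : ℝ → ℝ := fun u => u ^ (H-1) * ∫ r in (0:ℝ)..u, Real.exp (-r) * (T - u + r) ^ (2*H-1)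
    with hg₀
  -- Step A : rewrite numerator
  have hnum : (∫ u in Ioc (0:ℝ) T,
        Real.exp (-u) * u ^ (H - 1) *
          ∫ a in Ioc (T - u) T, Real.exp (-a) * a ^ (2*H - 1))
      = Real.exp (-T) * ∫ u in Ioc (0:ℝ) T, g₀ u := by
    rw [← MeasureTheory.integral_const_mul]
    refine setIntegral_congr_fun measurableSet_Ioc ?_
    intro u hu
    have h1 : T - u ≤ T := by linarith [hu.1]
    show Real.exp (-u) * u ^ (H - 1) *
        (∫ a in Ioc (T - u) T, Real.exp (-a) * a ^ (2*H - 1)) = Real.exp (-T) * g₀ u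
    rw [← intervalIntegral.integral_of_le h1]
    have hsub := intervalIntegral.integral_comp_add_left (a := 0) (b := u)
      (fun a => Real.exp (-a) * a ^ (2*H-1)) (T - u)
    rw [add_zero, show T - u + u = T by ring] at hsub
    rw [← hsub]
    calc Real.exp (-u) * u ^ (H-1) *
          ∫ x in (0:ℝ)..u, (fun a => Real.exp (-a) * a ^ (2*H-1)) (T - u + x)
        = ∫ x in (0:ℝ)..u,
            Real.exp (-u) * u ^ (H-1) * (Real.exp (-(T - u + x)) * (T - u + x) ^ (2*H-1)) := by
          rw [intervalIntegral.integral_const_mul]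
      _ = ∫ x in (0:ℝ)..u,
            Real.exp (-T) * (u ^ (H-1) * (Real.exp (-x) * (T - u + x) ^ (2*H-1))) := by
          apply intervalIntegral.integral_congr
          intro x _
          have he : Real.exp (-u) * Real.exp (-(T - u + x)) = Real.exp (-T) * Real.exp (-x) := by
            rw [← Real.exp_add, ← Real.exp_add]
            congr 1
            ring
          linear_combination (u ^ (H-1) * (T - u + x) ^ (2*H-1)) * he
      _ = Real.exp (-T) * g₀ u := by
          rw [intervalIntegral.integral_const_mul, intervalIntegral.integral_const_mul, hg₀]
  rw [hnum, mul_div_mul_left _ _ (Real.exp_ne_zero (-T)), div_eq_mul_inv,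
    ← Real.rpow_neg hT.le, show -(3*H - 1) = 1 - 3*H by ring]
  -- Step C : substitution u = T s
  have hM := intervalIntegral.smul_integral_comp_mul_left (a := 0) (b := 1) g₀ T
  rw [mul_zero, mul_one] at hM
  rw [← intervalIntegral.integral_of_le hT.le, ← hM, smul_eq_mul,
    intervalIntegral.integral_of_le (by norm_num : (0:ℝ) ≤ 1),
    integral_Ioc_eq_integral_Ioo]
  -- now : (T * ∫ s in Ioo 0 1, g₀ (T*s)) * T^(1-3H) = ∫ z, Phi z ∂ρ
  rw [mul_comm T (∫ s in Ioo (0:ℝ) 1, g₀ (T*s)), mul_assoc, mul_comm (T:ℝ) (T ^ (1-3*H)),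
    ← MeasureTheory.integral_mul_const]
  have hInt' : Integrable (Function.uncurry fun s r => stmt10Phi H T (s, r)) stmt10rho := hInt
  rw [stmt10rho] at hInt'
  rw [show (∫ z, stmt10Phi H T z ∂stmt10rho)
      = ∫ s in Ioo (0:ℝ) 1, ∫ r in Ioi (0:ℝ), stmt10Phi H T (s, r) from
    (MeasureTheory.integral_integral hInt').symm]
  refine setIntegral_congr_fun measurableSet_Ioo ?_
  intro s hs
  have hs0 : (0:ℝ) < s := hs.1
  have hs1 : s < 1 := hs.2
  have h1s : (0:ℝ) < 1 - s := by linarith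
  have hTs : (0:ℝ) ≤ T * s := by positivity
  -- inner rpow manipulation
  have hcong : (∫ r in (0:ℝ)..(T*s), Real.exp (-r) * (T - T*s + r) ^ (2*H-1))
      = T ^ (2*H-1) * ∫ r in (0:ℝ)..(T*s), Real.exp (-r) * (1 - s + r/T) ^ (2*H-1) := by
    rw [← intervalIntegral.integral_const_mul]
    apply intervalIntegral.integral_congr
    intro r hr
    rw [uIcc_of_le hTs] at hr
    have hr0 : 0 ≤ r := hr.1
    have hrT : 0 ≤ r / T := div_nonneg hr0 hT.le
    have harg : T - T*s + r = T * (1 - s + r/T) := by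
      field_simp
    show Real.exp (-r) * (T - T*s + r) ^ (2*H-1)
        = T ^ (2*H-1) * (Real.exp (-r) * (1 - s + r/T) ^ (2*H-1))
    rw [harg, Real.mul_rpow hT.le (by linarith)]
    ring
  have hpow : T * T ^ (1-3*H) * T ^ (H-1) * T ^ (2*H-1) = 1 := by
    nth_rewrite 1 [← Real.rpow_one T]
    rw [← Real.rpow_add hT, ← Real.rpow_add hT, ← Real.rpow_add hT,
      show (1:ℝ) + (1-3*H) + (H-1) + (2*H-1) = 0 by ring, Real.rpow_zero]
  have hK : (∫ r in (0:ℝ)..(T*s), Real.exp (-r) * (1 - s + r/T) ^ (2*H-1))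
      = ∫ r in Ioi (0:ℝ),
          (Ioc (0:ℝ) (T*s)).indicator (fun r => Real.exp (-r) * (1 - s + r/T) ^ (2*H-1)) r := by
    rw [intervalIntegral.integral_of_le hTs,
      MeasureTheory.integral_indicator measurableSet_Ioc,
      Measure.restrict_restrict measurableSet_Ioc,
      Set.inter_eq_self_of_subset_left Ioc_subset_Ioi_self]
  have hPhi : (∫ r in Ioi (0:ℝ), stmt10Phi H T (s, r))
      = s ^ (H-1) * ∫ r in Ioi (0:ℝ),
          (Ioc (0:ℝ) (T*s)).indicator (fun r => Real.exp (-r) * (1 - s + r/T) ^ (2*H-1)) r := by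
    simp only [stmt10Phi]
    exact MeasureTheory.integral_const_mul _ _
  show g₀ (T * s) * (T ^ (1-3*H) * T) = ∫ r in Ioi (0:ℝ), stmt10Phi H T (s, r)
  rw [hPhi, ← hK, hg₀]
  simp only []
  rw [hcong, Real.mul_rpow hT.le hs0.le]
  linear_combination (s ^ (H-1) * ∫ r in (0:ℝ)..(T*s), Real.exp (-r) * (1 - s + r/T) ^ (2*H-1)) * hpow

open MeasureTheory Real Set Filter in
theorem stmt10 (H : ℝ) (hH : H ∈ Set.Ioo (0:ℝ) (1/2)) :
    Filter.Tendsto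
      (fun T : ℝ =>
        (∫ u in Set.Ioc (0:ℝ) T,
            Real.exp (-u) * u ^ (H - 1) *
              ∫ a in Set.Ioc (T - u) T, Real.exp (-a) * a ^ (2*H - 1))
          / (Real.exp (-T) * T ^ (3*H - 1)))
      Filter.atTop
      (nhds (∫ x in Set.Ioc (0:ℝ) 1, x ^ (2*H - 1) * (1 - x) ^ (H - 1))) := by
  have hGint : Integrable (stmt10G H) stmt10rho := stmt10G_int hH
  have hPhiInt : ∀ T : ℝ, 0 < T → Integrable (stmt10Phi H T) stmt10rho := fun T hT =>
    Integrable.mono' hGint (stmt10Phi_meas H T).aestronglyMeasurable (stmt10_bound hH hT)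
  have hDCT : Tendsto (fun T => ∫ z, stmt10Phi H T z ∂stmt10rho) atTop
      (𝓝 (∫ z, stmt10G H z ∂stmt10rho)) :=
    tendsto_integral_filter_of_dominated_convergence (stmt10G H)
      (Eventually.of_forall fun T => (stmt10Phi_meas H T).aestronglyMeasurable)
      ((eventually_gt_atTop 0).mono fun T hT => stmt10_bound hH hT)
      hGint (stmt10_lim hH)
  rw [show (∫ x in Set.Ioc (0:ℝ) 1, x ^ (2*H - 1) * (1 - x) ^ (H - 1))
      = ∫ z, stmt10G H z ∂stmt10rho from by rw [stmt10G_integral hH, ← reflect_eq H]]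
  refine hDCT.congr' ?_
  filter_upwards [eventually_gt_atTop (0:ℝ)] with T hT
  exact (stmt10_cov hH hT (hPhiInt T hT)).symm
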